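/- Let T : ℝ₊^K → ℝ₊₊^K be a standard interference mapping with a fixed point p* ∈ ℝ₊₊^K. Then for every starting point p₁ ∈ ℝ₊^K, the sequence defined by p_{n+1} = T(p_n) converges to p*. -/

import Mathlib

/-- `f` is a standard interference function on `ℝ₊^K`: strictly positive on the
nonnegative orthant, monotone w.r.t. the coordinatewise order, and scalable. -/
def IsStdIF {K : ℕ} (f : (Fin K → ℝ) → ℝ) : Prop :=
  (∀ p : Fin K → ℝ, (∀ i, 0 ≤ p i) → 0 < f p) ∧
  (∀ p q : Fin K → ℝ, (∀ i, 0 ≤ q i) → (∀ i, q i ≤ p i) → f q ≤ f p) ∧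
  (∀ p : Fin K → ℝ, (∀ i, 0 ≤ p i) → ∀ α : ℝ, 1 < α → f (α • p) < α * f p)

theorem stmt7 {K : ℕ} (T : (Fin K → ℝ) → (Fin K → ℝ))
    (hT : ∀ k : Fin K, IsStdIF (fun p => T p k))
    (pstar : Fin K → ℝ) (hpos : ∀ i, 0 < pstar i) (hfix : T pstar = pstar)
    (p₁ : Fin K → ℝ) (hp₁ : ∀ i, 0 ≤ p₁ i) :
    Filter.Tendsto (fun n => T^[n] p₁) Filter.atTop (nhds pstar) := by
  classical
  rcases Nat.eq_zero_or_pos K with hK | hK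
  · subst hK
    have : ∀ n, T^[n] p₁ = pstar := fun n => Subsingleton.elim _ _
    simpa [this] using (tendsto_const_nhds : Filter.Tendsto (fun _ : ℕ => pstar) _ _)
  haveI : Nonempty (Fin K) := ⟨⟨0, hK⟩⟩
  -- basic properties of T
  have Tpos : ∀ p, (∀ i, 0 ≤ p i) → ∀ k, 0 < T p k := fun p hp k => (hT k).1 p hp
  have Tmono : ∀ p q, (∀ i, 0 ≤ q i) → (∀ i, q i ≤ p i) → ∀ k, T q k ≤ T p k :=
    fun p q h1 h2 k => (hT k).2.1 p q h1 h2
  have Tscale : ∀ p, (∀ i, 0 ≤ p i) → ∀ α : ℝ, 1 < α → ∀ k, T (α • p) k < α * T p k :=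
    fun p hp α hα k => (hT k).2.2 p hp α hα
  have hsm : ∀ c : ℝ, 0 ≤ c → ∀ i, 0 ≤ (c • pstar) i := by
    intro c hc i
    simp only [Pi.smul_apply, smul_eq_mul]
    exact mul_nonneg hc (hpos i).le
  -- the upper ratio function g
  set g : ℝ → ℝ := fun β =>
    Finset.univ.sup' Finset.univ_nonempty (fun k => T (β • pstar) k / pstar k) with hgdef
  have gub : ∀ β k, T (β • pstar) k ≤ g β * pstar k := by
    intro β k
    have := Finset.le_sup' (fun k => T (β • pstar) k / pstar k) (Finset.mem_univ k)
    exact (div_le_iff₀ (hpos k)).mp this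
  have gle : ∀ β c, (∀ k, T (β • pstar) k ≤ c * pstar k) → g β ≤ c := by
    intro β c h
    exact Finset.sup'_le _ _ fun k _ => (div_le_iff₀ (hpos k)).mpr (h k)
  have g_ge_one : ∀ β, 1 ≤ β → 1 ≤ g β := by
    intro β hβ
    obtain ⟨k⟩ := (inferInstance : Nonempty (Fin K))
    have h1 : pstar k ≤ T (β • pstar) k := by
      have := Tmono (β • pstar) pstar (fun i => (hpos i).le)
        (fun i => by
          simp only [Pi.smul_apply, smul_eq_mul]
          nlinarith [hpos i]) k
      rwa [hfix] at this
    have h2 := gub β k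
    nlinarith [hpos k]
  have g_lt : ∀ β, 1 < β → g β < β := by
    intro β hβ
    rw [hgdef]
    rw [Finset.sup'_lt_iff]
    intro k _
    rw [div_lt_iff₀ (hpos k)]
    have := Tscale pstar (fun i => (hpos i).le) β hβ k
    rwa [hfix] at this
  have g_scale : ∀ β β', 1 ≤ β' → β' ≤ β → g β ≤ (β / β') * g β' := by
    intro β β' hβ'1 hle
    rcases eq_or_lt_of_le hle with rfl | hlt
    · rw [div_self (by linarith)]; ring_nf; exact le_refl _
    · have hβ'0 : (0:ℝ) < β' := by linarith
      have hα : 1 < β / β' := (one_lt_div hβ'0).mpr hlt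
      apply gle
      intro k
      have key : T (β • pstar) k < (β / β') * T (β' • pstar) k := by
        have := Tscale (β' • pstar) (hsm β' (by linarith)) (β / β') hα k
        rwa [smul_smul, div_mul_cancel₀ _ (by linarith : β' ≠ 0)] at this
      have h2 := gub β' k
      have : (β / β') * T (β' • pstar) k ≤ (β / β') * (g β' * pstar k) :=
        mul_le_mul_of_nonneg_left h2 (by positivity)
      calc T (β • pstar) k ≤ (β / β') * (g β' * pstar k) := by linarith
        _ = ((β / β') * g β') * pstar k := by ring
  -- the lower ratio function m
  set m : ℝ → ℝ := fun μ =>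
    Finset.univ.inf' Finset.univ_nonempty (fun k => T (μ • pstar) k / pstar k) with hmdef
  have mlb : ∀ μ k, m μ * pstar k ≤ T (μ • pstar) k := by
    intro μ k
    have := Finset.inf'_le (fun k => T (μ • pstar) k / pstar k) (Finset.mem_univ k)
    exact (le_div_iff₀ (hpos k)).mp this
  have mge : ∀ μ c, (∀ k, c * pstar k ≤ T (μ • pstar) k) → c ≤ m μ := by
    intro μ c h
    exact Finset.le_inf' _ _ fun k _ => (le_div_iff₀ (hpos k)).mpr (h k)
  have m_le_one : ∀ μ, 0 ≤ μ → μ ≤ 1 → m μ ≤ 1 := by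
    intro μ h0 h1
    obtain ⟨k⟩ := (inferInstance : Nonempty (Fin K))
    have h2 : T (μ • pstar) k ≤ pstar k := by
      have := Tmono pstar (μ • pstar) (hsm μ h0)
        (fun i => by
          simp only [Pi.smul_apply, smul_eq_mul]
          nlinarith [hpos i]) k
      rwa [hfix] at this
    have h3 := mlb μ k
    nlinarith [hpos k]
  have m_gt : ∀ μ, 0 < μ → μ < 1 → μ < m μ := by
    intro μ h0 h1
    rw [hmdef, Finset.lt_inf'_iff]
    intro k _
    rw [lt_div_iff₀ (hpos k)]
    have hα : 1 < 1 / μ := by rw [lt_div_iff₀ h0]; linarith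
    have := Tscale (μ • pstar) (hsm μ h0.le) (1 / μ) hα k
    rw [smul_smul, one_div_mul_cancel (ne_of_gt h0), one_smul, hfix] at this
    have h2 : μ * pstar k < μ * (1 / μ * T (μ • pstar) k) := mul_lt_mul_of_pos_left this h0
    have h3 : μ * (1 / μ * T (μ • pstar) k) = T (μ • pstar) k := by field_simp
    linarith
  have m0 : 0 < m 0 := by
    rw [hmdef, Finset.lt_inf'_iff]
    intro k _
    exact div_pos (Tpos _ (hsm 0 le_rfl) k) (hpos k)
  have m_ge_one : 1 ≤ m 1 := by
    apply mge
    intro k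
    rw [one_smul, hfix, one_mul]
  have m_scale : ∀ μ μ', 0 < μ → μ ≤ μ' → (μ / μ') * m μ' ≤ m μ := by
    intro μ μ' h0 hle
    rcases eq_or_lt_of_le hle with rfl | hlt
    · rw [div_self (ne_of_gt h0), one_mul]
    · have hμ'0 : (0:ℝ) < μ' := lt_trans h0 hlt
      have hα : 1 < μ' / μ := (one_lt_div h0).mpr hlt
      apply mge
      intro k
      have key : T (μ' • pstar) k < (μ' / μ) * T (μ • pstar) k := by
        have := Tscale (μ • pstar) (hsm μ h0.le) (μ' / μ) hα k
        rwa [smul_smul, div_mul_cancel₀ _ (ne_of_gt h0)] at this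
      have h2 := mlb μ' k
      have h3 : (μ / μ') * (m μ' * pstar k) ≤ (μ / μ') * T (μ' • pstar) k :=
        mul_le_mul_of_nonneg_left h2 (by positivity)
      have h4 : (μ / μ') * T (μ' • pstar) k ≤ T (μ • pstar) k := by
        rw [div_mul_eq_mul_div, div_le_iff₀ hμ'0]
        calc μ * T (μ' • pstar) k ≤ μ * ((μ' / μ) * T (μ • pstar) k) := by
              exact le_of_lt (mul_lt_mul_of_pos_left key h0)
          _ = T (μ • pstar) k * μ' := by field_simp
      calc (μ / μ') * m μ' * pstar k = (μ / μ') * (m μ' * pstar k) := by ring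
        _ ≤ T (μ • pstar) k := le_trans h3 h4
  -- choose α
  set α : ℝ := 2 + ∑ k, p₁ k / pstar k with hαdef
  have hsum_nonneg : (0:ℝ) ≤ ∑ k, p₁ k / pstar k :=
    Finset.sum_nonneg fun k _ => div_nonneg (hp₁ k) (hpos k).le
  have hα1 : 1 < α := by rw [hαdef]; linarith
  have hp₁le : ∀ k, p₁ k ≤ (α • pstar) k := by
    intro k
    have h1 : p₁ k / pstar k ≤ ∑ j, p₁ j / pstar j :=
      Finset.single_le_sum (fun j _ => div_nonneg (hp₁ j) (hpos j).le) (Finset.mem_univ k)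
    have : p₁ k / pstar k ≤ α := by rw [hαdef]; linarith
    simp only [Pi.smul_apply, smul_eq_mul]
    calc p₁ k = (p₁ k / pstar k) * pstar k := (div_mul_cancel₀ _ (ne_of_gt (hpos k))).symm
      _ ≤ α * pstar k := mul_le_mul_of_nonneg_right this (hpos k).le
  -- the scalar sequences
  set B : ℕ → ℝ := fun n => g^[n] α with hBdef
  have hBsucc : ∀ n, B (n + 1) = g (B n) := fun n => Function.iterate_succ_apply' g n α
  have hB0 : B 0 = α := rfl
  have hB1 : ∀ n, 1 ≤ B n := by
    intro n
    induction n with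
    | zero => rw [hB0]; linarith
    | succ n ih => rw [hBsucc]; exact g_ge_one _ ih
  have hBstep : ∀ n, B (n + 1) ≤ B n := by
    intro n
    rcases eq_or_lt_of_le (hB1 n) with h | h
    · rw [hBsucc, ← h]
      apply gle
      intro k
      rw [one_smul, hfix, one_mul]
    · rw [hBsucc]; exact (g_lt _ h).le
  have hBanti : Antitone B := antitone_nat_of_succ_le hBstep
  have hBbdd : BddBelow (Set.range B) := ⟨1, fun x ⟨n, hn⟩ => hn ▸ hB1 n⟩
  set βinf : ℝ := ⨅ n, B n with hβinfdef
  have hβinf_le : ∀ n, βinf ≤ B n := fun n => ciInf_le hBbdd n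
  have hβinf1 : 1 ≤ βinf := le_ciInf hB1
  have htendB : Filter.Tendsto B Filter.atTop (nhds βinf) :=
    tendsto_atTop_ciInf hBanti hBbdd
  have hβinf_eq : βinf = 1 := by
    by_contra hne
    have hgt : 1 < βinf := lt_of_le_of_ne hβinf1 (Ne.symm hne)
    set γ : ℝ := g βinf with hγdef
    have hγlt : γ < βinf := g_lt _ hgt
    have hγ1 : 1 ≤ γ := g_ge_one _ hgt.le
    set r : ℝ := γ / βinf with hrdef
    have hr0 : 0 ≤ r := by positivity
    have hr1 : r < 1 := (div_lt_one (by linarith)).mpr hγlt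
    have hgeom : ∀ n, B n ≤ r ^ n * α := by
      intro n
      induction n with
      | zero => simp [hB0]
      | succ n ih =>
        have h1 : B (n + 1) ≤ (B n / βinf) * γ := by
          rw [hBsucc]; exact g_scale (B n) βinf hβinf1 (hβinf_le n)
        have h2 : (B n / βinf) * γ = r * B n := by
          rw [hrdef]; field_simp
        calc B (n + 1) ≤ r * B n := by rw [← h2]; exact h1
          _ ≤ r * (r ^ n * α) := mul_le_mul_of_nonneg_left ih hr0
          _ = r ^ (n + 1) * α := by ring
    have hto0 : Filter.Tendsto (fun n => r ^ n * α) Filter.atTop (nhds 0) := by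
      have := tendsto_pow_atTop_nhds_zero_of_lt_one hr0 hr1
      simpa using this.mul_const α
    have hev : ∀ᶠ n in Filter.atTop, r ^ n * α < 1 := hto0.eventually (gt_mem_nhds one_pos)
    obtain ⟨n, hn⟩ := hev.exists
    linarith [hB1 n, hgeom n]
  -- M sequence
  set M : ℕ → ℝ := fun n => m^[n] 0 with hMdef
  have hMsucc : ∀ n, M (n + 1) = m (M n) := fun n => Function.iterate_succ_apply' m n 0
  have hM0 : M 0 = 0 := rfl
  have hMbound : ∀ n, 0 ≤ M n ∧ M n ≤ 1 := by
    intro n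
    induction n with
    | zero => rw [hM0]; exact ⟨le_rfl, zero_le_one⟩
    | succ n ih =>
      rw [hMsucc]
      constructor
      · rcases eq_or_lt_of_le ih.1 with h | h
        · exact le_of_lt (h ▸ m0)
        · rcases eq_or_lt_of_le ih.2 with h2 | h2
          · rw [h2]; linarith [m_ge_one]
          · exact le_of_lt (lt_trans h (m_gt _ h h2))
      · exact m_le_one _ ih.1 ih.2
  have hMstep : ∀ n, M n ≤ M (n + 1) := by
    intro n
    rw [hMsucc]
    rcases eq_or_lt_of_le (hMbound n).1 with h | h
    · rw [← h]; exact le_of_lt (h ▸ m0)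
    · rcases eq_or_lt_of_le (hMbound n).2 with h2 | h2
      · rw [h2]; linarith [m_ge_one]
      · exact le_of_lt (m_gt _ h h2)
  have hMmono : Monotone M := monotone_nat_of_le_succ hMstep
  have hMbdd : BddAbove (Set.range M) := ⟨1, fun x ⟨n, hn⟩ => hn ▸ (hMbound n).2⟩
  set μsup : ℝ := ⨆ n, M n with hμdef
  have hμ_ge : ∀ n, M n ≤ μsup := fun n => le_ciSup hMbdd n
  have hμ_le1 : μsup ≤ 1 := ciSup_le fun n => (hMbound n).2
  have hM1pos : 0 < M 1 := by rw [hMsucc 0, hM0]; exact m0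
  have hμpos : 0 < μsup := lt_of_lt_of_le hM1pos (hμ_ge 1)
  have htendM : Filter.Tendsto M Filter.atTop (nhds μsup) :=
    tendsto_atTop_ciSup hMmono hMbdd
  have hμ_eq : μsup = 1 := by
    by_contra hne
    have hlt : μsup < 1 := lt_of_le_of_ne hμ_le1 hne
    set δ : ℝ := m μsup with hδdef
    have hδgt : μsup < δ := m_gt _ hμpos hlt
    set s : ℝ := δ / μsup with hsdef
    have hs1 : 1 < s := (one_lt_div hμpos).mpr hδgt
    have hs0 : 0 ≤ s := by linarith
    have hMpos : ∀ n, 0 < M (n + 1) := fun n =>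
      lt_of_lt_of_le hM1pos (hMmono (Nat.succ_le_succ (Nat.zero_le n)))
    have hgeom : ∀ n, s ^ n * M 1 ≤ M (n + 1) := by
      intro n
      induction n with
      | zero => simp
      | succ n ih =>
        have h1 : (M (n + 1) / μsup) * δ ≤ M (n + 2) := by
          rw [hMsucc (n + 1)]
          have := m_scale (M (n + 1)) μsup (hMpos n) (hμ_ge (n + 1))
          calc (M (n + 1) / μsup) * δ = (M (n + 1) / μsup) * m μsup := by rw [hδdef]
            _ ≤ m (M (n + 1)) := this
        have h2 : (M (n + 1) / μsup) * δ = s * M (n + 1) := by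
          rw [hsdef]; field_simp
        calc s ^ (n + 1) * M 1 = s * (s ^ n * M 1) := by ring
          _ ≤ s * M (n + 1) := mul_le_mul_of_nonneg_left ih hs0
          _ = (M (n + 1) / μsup) * δ := h2.symm
          _ ≤ M (n + 2) := h1
    have htop : Filter.Tendsto (fun n => s ^ n * M 1) Filter.atTop Filter.atTop :=
      (tendsto_pow_atTop_atTop_of_one_lt hs1).atTop_mul_const hM1pos
    obtain ⟨n, hn⟩ := (htop.eventually_gt_atTop 1).exists
    linarith [hgeom n, (hMbound (n + 1)).2]
  -- iterate facts
  have iter_nonneg : ∀ p, (∀ i, 0 ≤ p i) → ∀ n i, 0 ≤ T^[n] p i := by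
    intro p hp n
    induction n with
    | zero => exact hp
    | succ n ih =>
      intro i
      rw [Function.iterate_succ_apply']
      exact (Tpos _ ih i).le
  have iter_mono : ∀ p q, (∀ i, 0 ≤ q i) → (∀ i, q i ≤ p i) → ∀ n k, T^[n] q k ≤ T^[n] p k := by
    intro p q hq hle n
    induction n with
    | zero => exact hle
    | succ n ih =>
      intro k
      rw [Function.iterate_succ_apply', Function.iterate_succ_apply']
      exact Tmono _ _ (iter_nonneg q hq n) ih k
  have upper : ∀ n k, T^[n] (α • pstar) k ≤ B n * pstar k := by
    intro n
    induction n with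
    | zero =>
      intro k
      rw [hB0]
      simp [Pi.smul_apply, smul_eq_mul]
    | succ n ih =>
      intro k
      rw [Function.iterate_succ_apply', hBsucc]
      calc T (T^[n] (α • pstar)) k ≤ T (B n • pstar) k := by
            apply Tmono _ _ (iter_nonneg _ (hsm α (by linarith)) n)
            intro i
            have := ih i
            simpa [Pi.smul_apply, smul_eq_mul] using this
        _ ≤ g (B n) * pstar k := gub (B n) k
  have lower : ∀ n k, M n * pstar k ≤ T^[n] (0 : Fin K → ℝ) k := by
    intro n
    induction n with
    | zero =>
      intro k
      rw [hM0]
      simp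
    | succ n ih =>
      intro k
      rw [Function.iterate_succ_apply', hMsucc]
      calc m (M n) * pstar k ≤ T (M n • pstar) k := mlb (M n) k
        _ ≤ T (T^[n] (0 : Fin K → ℝ)) k := by
            apply Tmono _ _ (hsm (M n) (hMbound n).1)
            intro i
            have := ih i
            simpa [Pi.smul_apply, smul_eq_mul] using this
  -- final squeeze
  rw [tendsto_pi_nhds]
  intro k
  have hlo : ∀ n, M n * pstar k ≤ T^[n] p₁ k := by
    intro n
    calc M n * pstar k ≤ T^[n] (0 : Fin K → ℝ) k := lower n k
      _ ≤ T^[n] p₁ k := iter_mono p₁ 0 (fun i => le_rfl) (fun i => hp₁ i) n k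
  have hhi : ∀ n, T^[n] p₁ k ≤ B n * pstar k := by
    intro n
    calc T^[n] p₁ k ≤ T^[n] (α • pstar) k := iter_mono (α • pstar) p₁ hp₁ hp₁le n k
      _ ≤ B n * pstar k := upper n k
  have hloT : Filter.Tendsto (fun n => M n * pstar k) Filter.atTop (nhds (pstar k)) := by
    have := htendM.mul_const (pstar k)
    rwa [hμ_eq, one_mul] at this
  have hhiT : Filter.Tendsto (fun n => B n * pstar k) Filter.atTop (nhds (pstar k)) := by
    have := htendB.mul_const (pstar k)
    rwa [hβinf_eq, one_mul] at this
  exact tendsto_of_tendsto_of_tendsto_of_le_of_le hloT hhiT hlo hhi
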